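/- Considering ℝ^ℕ (the space of all real sequences) and ℝ as vector spaces over the field ℚ of rational numbers, there exists a ℚ-linear bijection f : ℝ^ℕ → ℝ. Consequently, there exists a metric d on ℝ such that (ℝ, +, d), where + is the usual addition of real numbers, is an abelian Polish group which is not locally compact, being topologically isomorphic as a topological group to (ℝ^ℕ, +) equipped with the product (Tychonoff) topology; in particular, the usual addition of ℝ admits a group topology which is Polish and not locally compact. -/

import Mathlib

open Topology

open Cardinal in
lemma mk_pi_real : #(ℕ → ℝ) = 𝔠 := by
  rw [Cardinal.mk_arrow]
  simp [Cardinal.mk_real, continuum_power_aleph0]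

open Cardinal in
lemma rank_pi_real : Module.rank ℚ (ℕ → ℝ) = Module.rank ℚ ℝ := by
  rw [Real.rank_rat_real]
  refine (Module.Free.rank_eq_mk_of_infinite_lt ℚ (ℕ → ℝ) ?_).trans mk_pi_real
  rw [Cardinal.lift_id, Cardinal.lift_id, mk_pi_real, Cardinal.mk_denumerable]
  exact aleph0_lt_continuum

noncomputable def Mpi : MetricSpace (ℕ → ℝ) := PiCountable.metricSpace

/-- Reindexing `ℝ^ℕ ≃+ (ℝ^ℕ)^ℕ` along a bijection `ℕ ≃ ℕ × ℕ`. -/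
noncomputable def Ecurry : (ℕ → ℝ) ≃+ (ℕ → ℕ → ℝ) where
  toFun x i j := x (Denumerable.eqv (ℕ × ℕ) (i, j))
  invFun y n := y ((Denumerable.eqv (ℕ × ℕ)).symm n).1 ((Denumerable.eqv (ℕ × ℕ)).symm n).2
  left_inv x := funext fun n => by simp
  right_inv y := funext fun i => funext fun j => by simp
  map_add' x y := rfl

lemma Ecurry_cont : Continuous Ecurry :=
  continuous_pi fun _ => continuous_pi fun _ => continuous_apply _

lemma Ecurry_symm_cont : Continuous (Ecurry.symm : (ℕ → ℕ → ℝ) → (ℕ → ℝ)) :=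
  continuous_pi fun n =>
    show Continuous fun y : ℕ → ℕ → ℝ =>
        y ((Denumerable.eqv (ℕ × ℕ)).symm n).1 ((Denumerable.eqv (ℕ × ℕ)).symm n).2 from
      (continuous_apply _).comp (continuous_apply _)

lemma pi_not_cpt (K : Set (ℕ → ℝ)) (hK : K ∈ 𝓝 (0 : ℕ → ℝ)) : ¬ IsCompact K := by
  intro hc
  rw [nhds_pi, Filter.mem_pi] at hK
  obtain ⟨I, hIf, t, ht, hsub⟩ := hK
  obtain ⟨n, hn⟩ := hIf.infinite_compl.nonempty
  have himg : (Set.univ : Set ℝ) ⊆ (fun x : ℕ → ℝ => x n) '' K := by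
    intro r _
    refine ⟨fun j => if j = n then r else 0, hsub fun j hj => ?_, by simp⟩
    have : j ≠ n := fun h => hn (h ▸ hj)
    simpa [this] using mem_of_mem_nhds (ht j)
  have hcpt : IsCompact ((fun x : ℕ → ℝ => x n) '' K) := hc.image (continuous_apply n)
  rw [Set.eq_univ_of_univ_subset himg] at hcpt
  exact noncompact_univ ℝ hcpt

lemma aux_all {G : Type*} [AddCommGroup G] (e : G ≃+ (ℕ → ℝ)) :
    ∃ m : MetricSpace G,
      @CompleteSpace G m.toUniformSpace ∧
      @TopologicalSpace.SeparableSpace G m.toUniformSpace.toTopologicalSpace ∧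
      @Continuous (G × G) G
        (@instTopologicalSpaceProd G G m.toUniformSpace.toTopologicalSpace
          m.toUniformSpace.toTopologicalSpace) m.toUniformSpace.toTopologicalSpace
        (fun p => -p.1 + p.2) ∧
      (∃ x : G, ∀ K ∈ @nhds G m.toUniformSpace.toTopologicalSpace x,
        ¬@IsCompact G m.toUniformSpace.toTopologicalSpace K) ∧
      ∃ e' : G ≃+ (ℕ → G),
        @Continuous G (ℕ → G) m.toUniformSpace.toTopologicalSpace
          (@Pi.topologicalSpace ℕ (fun _ => G)
            (fun _ => m.toUniformSpace.toTopologicalSpace)) e' ∧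
        @Continuous (ℕ → G) G
          (@Pi.topologicalSpace ℕ (fun _ => G)
            (fun _ => m.toUniformSpace.toTopologicalSpace))
          m.toUniformSpace.toTopologicalSpace e'.symm := by
  refine ⟨Mpi.induced e e.injective, ?_, ?_, ?_, ?_, ?_⟩
  · -- complete
    letI := Mpi
    letI : MetricSpace G := Mpi.induced e e.injective
    have hco : CompleteSpace (ℕ → ℝ) := by
      change @CompleteSpace (ℕ → ℝ) (Pi.uniformSpace _)
      infer_instance
    let ie : G ≃ᵢ (ℕ → ℝ) :=
      { toEquiv := e.toEquiv, isometry_toFun := Isometry.of_dist_eq fun _ _ => rfl }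
    exact ie.completeSpace_iff.2 hco
  · -- separable
    letI := Mpi
    letI : MetricSpace G := Mpi.induced e e.injective
    have hsep : TopologicalSpace.SeparableSpace (ℕ → ℝ) := by
      change @TopologicalSpace.SeparableSpace (ℕ → ℝ) Pi.topologicalSpace
      infer_instance
    have hconts : Continuous (e.symm : (ℕ → ℝ) → G) := by
      have : @Continuous (ℕ → ℝ) G Pi.topologicalSpace
          (TopologicalSpace.induced e Pi.topologicalSpace) e.symm :=
        continuous_induced_rng.2 (by rw [show (⇑e ∘ ⇑e.symm : (ℕ → ℝ) → (ℕ → ℝ)) = id from funext fun x => e.apply_symm_apply x]; exact continuous_id)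
      exact this
    exact (e.symm.surjective.denseRange).separableSpace hconts
  · -- group operation continuous
    have h : @Continuous (G × G) G
        (@instTopologicalSpaceProd G G (TopologicalSpace.induced e Pi.topologicalSpace)
          (TopologicalSpace.induced e Pi.topologicalSpace))
        (TopologicalSpace.induced e Pi.topologicalSpace) (fun p => -p.1 + p.2) := by
      letI : TopologicalSpace G := TopologicalSpace.induced e Pi.topologicalSpace
      refine continuous_induced_rng.2 ?_
      have heq : (⇑e ∘ fun p : G × G => -p.1 + p.2) = fun p : G × G => -(e p.1) + e p.2 := by
        funext p; simp
      rw [heq]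
      exact ((continuous_induced_dom.comp continuous_fst).neg).add
        (continuous_induced_dom.comp continuous_snd)
    exact h
  · -- not locally compact
    have h : ∃ x : G, ∀ K ∈ @nhds G (TopologicalSpace.induced e Pi.topologicalSpace) x,
        ¬@IsCompact G (TopologicalSpace.induced e Pi.topologicalSpace) K := by
      letI : TopologicalSpace G := TopologicalSpace.induced e Pi.topologicalSpace
      refine ⟨0, fun K hK hc => ?_⟩
      have hcont : Continuous (e : G → (ℕ → ℝ)) := continuous_induced_dom
      have himg : IsCompact (e '' K) := hc.image hcont
      have hnhds : e '' K ∈ 𝓝 (0 : ℕ → ℝ) := by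
        rw [nhds_induced] at hK
        obtain ⟨V, hV, hVK⟩ := hK
        rw [map_zero] at hV
        refine Filter.mem_of_superset hV fun y hy => ?_
        exact ⟨e.symm y, hVK (by simpa using hy), by simp⟩
      exact pi_not_cpt _ hnhds himg
    exact h
  · -- the topological isomorphism (ℝ, t) ≃ (ℝ, t)^ℕ
    have h : ∃ e' : G ≃+ (ℕ → G),
        @Continuous G (ℕ → G) (TopologicalSpace.induced e Pi.topologicalSpace)
          (@Pi.topologicalSpace ℕ (fun _ => G)
            (fun _ => TopologicalSpace.induced e Pi.topologicalSpace)) e' ∧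
        @Continuous (ℕ → G) G
          (@Pi.topologicalSpace ℕ (fun _ => G)
            (fun _ => TopologicalSpace.induced e Pi.topologicalSpace))
          (TopologicalSpace.induced e Pi.topologicalSpace) e'.symm := by
      letI : TopologicalSpace G := TopologicalSpace.induced e Pi.topologicalSpace
      have hcont : Continuous (e : G → (ℕ → ℝ)) := continuous_induced_dom
      have hconts : Continuous (e.symm : (ℕ → ℝ) → G) :=
        continuous_induced_rng.2 (by rw [show (⇑e ∘ ⇑e.symm : (ℕ → ℝ) → (ℕ → ℝ)) = id from funext fun x => e.apply_symm_apply x]; exact continuous_id)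
      refine ⟨(e.trans Ecurry).trans (AddEquiv.piCongrRight fun _ => e.symm), ?_, ?_⟩
      · have : ⇑((e.trans Ecurry).trans (AddEquiv.piCongrRight fun _ => e.symm)) =
            (fun y : ℕ → ℕ → ℝ => fun i => e.symm (y i)) ∘ (⇑Ecurry ∘ ⇑e) := rfl
        rw [this]
        exact (continuous_pi fun i => hconts.comp (continuous_apply i)).comp
          (Ecurry_cont.comp hcont)
      · have : ⇑((e.trans Ecurry).trans (AddEquiv.piCongrRight fun _ => e.symm)).symm =
            (⇑e.symm ∘ ⇑Ecurry.symm) ∘ (fun y : ℕ → G => fun i => e (y i)) := rfl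
        rw [this]
        exact (hconts.comp Ecurry_symm_cont).comp
          (continuous_pi fun i => hcont.comp (continuous_apply i))
    exact h

/-- Example 2.10: there is a ℚ-linear bijection `f : ℝ^ℕ → ℝ`, and
consequently a metric `d` on `ℝ` making `(ℝ, +, d)` (with the usual addition) an
abelian non-locally compact Polish group topologically isomorphic to `(ℝ^ℕ, +)`
with the product (Tychonoff) topology. -/
theorem real_usual_addition_non_locally_compact_polish :
    (∃ f : (ℕ → ℝ) ≃+ ℝ,
      ∀ (q : ℚ) (x : ℕ → ℝ), f (q • x) = (q : ℝ) • f x) ∧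
    ∃ m : MetricSpace ℝ,
      let t : TopologicalSpace ℝ := m.toUniformSpace.toTopologicalSpace
      @CompleteSpace ℝ m.toUniformSpace ∧
      @TopologicalSpace.SeparableSpace ℝ t ∧
      @Continuous (ℝ × ℝ) ℝ (@instTopologicalSpaceProd ℝ ℝ t t) t
        (fun p => -p.1 + p.2) ∧
      (∃ x : ℝ, ∀ K ∈ @nhds ℝ t x, ¬@IsCompact ℝ t K) ∧
      ∃ e : ℝ ≃+ (ℕ → ℝ),
        @Continuous ℝ (ℕ → ℝ) t inferInstance e ∧
        @Continuous (ℕ → ℝ) ℝ inferInstance t e.symm := by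
  obtain ⟨f⟩ := nonempty_linearEquiv_of_rank_eq rank_pi_real
  obtain ⟨m, h1, h2, h3, h4, e', h5, h6⟩ := aux_all (f.toAddEquiv.symm)
  exact ⟨⟨f.toAddEquiv, fun q x => by
      show f (q • x) = (q : ℝ) • f x
      rw [map_smul]; norm_num [Rat.smul_def]⟩,
    m, h1, h2, h3, h4, e', h5, h6⟩
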